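/- Let h be a Lie algebra acting on an L∞ algebra g with 0-action κ: h → g^1 and 1-action ▷: h × g → g. Then h_0 := ker κ is a Lie subalgebra of h. Moreover, for every h ∈ h_0 the operator x ↦ h▷x commutes with d up to the relation d(h▷x) = h▷(dx) (since [κh, x]_2 = 0), hence induces an action of h_0 on the cohomology H(g) = ker d / im d by h▷x̄ := (h▷x)‾. -/
import Mathlib


/-!
STATEMENT 11: Let h be a Lie algebra acting on an L∞ algebra g with 0-action κ : h → g¹ and
1-action ▷ : h × g → g (and 2-action μ₂).  Then h₀ := ker κ is a Lie subalgebra of h.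
Moreover, for every a ∈ h₀ the operator x ↦ a▷x commutes with d (since [κa, x]₂ = 0), hence
induces an action of h₀ on the cohomology H(g) = ker d / im d by a ▷ x̄ := (a ▷ x)‾:
the action of a ∈ h₀ preserves cocycles, preserves coboundaries (indeed a▷(dx) = d(a▷x)),
and the bracket of h₀ acts through commutators on cocycles.

The relevant action axioms (d∘κ = 0, κ[a,b] = a▷κb − b▷κa, d(a▷x) = [κa,x]₂ + a▷(dx), and the
n = 2 compatibility [a,b]▷x = a▷(b▷x) − b▷(a▷x) + μ₂(a,κb,x) − μ₂(b,κa,x)) are hypotheses,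
together with vanishing of the multilinear maps μ₂ and [·,·]₂ when one argument is 0.
-/

theorem kernel_acts_on_cohomology
    {K V : Type} [Field K] [CharZero K] [AddCommGroup V] [Module K V]
    (A : Type) [LieRing A] [LieAlgebra K A]
    (ℬ : ℤ → Submodule K V)
    (d : V →ₗ[K] V) (b2 : V → V → V)
    (κ : A →ₗ[K] V) (act : A → V → V) (act2 : A → V → V → V)
    (hκdeg : ∀ a : A, κ a ∈ ℬ 1)
    (h0 : ∀ a : A, d (κ a) = 0)
    (h11 : ∀ a b : A, κ ⁅a, b⁆ = act a (κ b) - act b (κ a))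
    (h12 : ∀ (a : A) (x : V), d (act a x) = b2 (κ a) x + act a (d x))
    (h21 : ∀ (a b : A) (x : V),
      act ⁅a, b⁆ x = act a (act b x) - act b (act a x) + act2 a (κ b) x - act2 b (κ a) x)
    (hb2zero : ∀ x : V, b2 0 x = 0)
    (hact2zero : ∀ (a : A) (x : V), act2 a 0 x = 0) :
    -- h₀ = ker κ is a Lie subalgebra of h:
    (∃ s : LieSubalgebra K A, ∀ a : A, a ∈ s ↔ κ a = 0) ∧
    -- for a ∈ h₀, a▷· commutes with d, hence preserves cocycles and coboundaries,
    -- inducing an action on H(g) = ker d / im d: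
    (∀ (a : A) (x : V), κ a = 0 → d (act a x) = act a (d x)) ∧
    (∀ (a : A) (x : V), κ a = 0 → d x = 0 → d (act a x) = 0) ∧
    (∀ (a : A) (y : V), κ a = 0 → act a (d y) ∈ LinearMap.range d) ∧
    -- the induced operation is a Lie algebra action on cocycles:
    (∀ (a b : A) (x : V), κ a = 0 → κ b = 0 →
      act ⁅a, b⁆ x = act a (act b x) - act b (act a x)) := by
  have hact00 : ∀ x : V, act 0 x = 0 := by
    intro x
    have := h21 0 0 x
    simpa using this
  have hact0 : ∀ a : A, act a 0 = 0 := by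
    intro a
    have := h11 a 0
    simp only [lie_zero, map_zero, hact00] at this
    have := sub_eq_zero.mp this.symm
    simpa [hact00] using this
  refine ⟨⟨{ toSubmodule := LinearMap.ker κ, lie_mem' := ?_ }, fun a => LinearMap.mem_ker⟩,
    ?_, ?_, ?_, ?_⟩
  · intro a b ha hb
    have ha' : κ a = 0 := ha
    have hb' : κ b = 0 := hb
    show κ ⁅a, b⁆ = 0
    rw [h11, ha', hb', hact0, hact0, sub_self]
  · intro a x ha
    rw [h12, ha, hb2zero, zero_add]
  · intro a x ha hx
    rw [h12, ha, hb2zero, zero_add, hx, hact0]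
  · intro a y ha
    refine ⟨act a y, ?_⟩
    rw [h12, ha, hb2zero, zero_add]
  · intro a b x ha hb
    rw [h21, ha, hb, hact2zero, hact2zero, sub_zero, add_zero]
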